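/- For real a, x, y, k, l, r, q with 0 < q < 1, 0 ≤ a < 1, x ≥ y, k ≥ l ≥ r ≥ 0, and y - l ≥ x - k ≥ 0, the a;q-binomial coefficients satisfy [x choose k]_{a;q}·[y choose l]_{a;q} ≥ [x choose k+r]_{a;q}·[y choose l-r]_{a;q}. -/

import Mathlib

/-- The a;q-binomial coefficient, defined via an infinite product. -/
noncomputable def aqBinom (a q x k : ℝ) : ℝ :=
  q ^ (k * (k - x)) *
    ∏' j : ℕ,
      ((1 - q ^ (1 + k + (j : ℝ))) * (1 - a * q ^ (1 + k + (j : ℝ)))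
          * (1 - q ^ (1 + x - k + (j : ℝ))) * (1 - a * q ^ (1 + x - k + (j : ℝ)))) /
        ((1 - q ^ (1 + (j : ℝ))) * (1 - a * q ^ (1 + (j : ℝ)))
          * (1 - q ^ (1 + x + (j : ℝ))) * (1 - a * q ^ (1 + x + (j : ℝ))))

namespace AqBinomAux

open Finset

/-- The basic factor `(1 - q^t)(1 - a q^t)`. -/
noncomputable def pf (a q t : ℝ) : ℝ := (1 - q ^ t) * (1 - a * q ^ t)

variable {a q : ℝ}

lemma pf_nonneg (hq : 0 < q) (hq1 : q < 1) (ha : 0 ≤ a) (ha1 : a < 1) {t : ℝ} (ht : 0 ≤ t) :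
    0 ≤ pf a q t := by
  have h1 : q ^ t ≤ 1 := Real.rpow_le_one hq.le hq1.le ht
  have h2 : 0 < q ^ t := Real.rpow_pos_of_pos hq t
  have h3 : a * q ^ t ≤ 1 := mul_le_one₀ ha1.le h2.le h1
  exact mul_nonneg (by linarith) (by linarith)

lemma pf_pos (hq : 0 < q) (hq1 : q < 1) (ha : 0 ≤ a) (ha1 : a < 1) {t : ℝ} (ht : 0 < t) :
    0 < pf a q t := by
  have h1 : q ^ t < 1 := Real.rpow_lt_one hq.le hq1 ht
  have h2 : 0 < q ^ t := Real.rpow_pos_of_pos hq t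
  have h3 : a * q ^ t ≤ a := mul_le_of_le_one_right ha h1.le
  exact mul_pos (by linarith) (by linarith)

lemma pf_le_one (hq : 0 < q) (hq1 : q < 1) (ha : 0 ≤ a) (ha1 : a < 1) {t : ℝ} (ht : 0 ≤ t) :
    pf a q t ≤ 1 := by
  have h1 : q ^ t ≤ 1 := Real.rpow_le_one hq.le hq1.le ht
  have h2 : 0 < q ^ t := Real.rpow_pos_of_pos hq t
  have h3 : 0 ≤ a * q ^ t := mul_nonneg ha h2.le
  have h4 : a * q ^ t ≤ 1 := mul_le_one₀ ha1.le h2.le h1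
  exact mul_le_one₀ (by linarith) (by linarith) (by linarith)

lemma pf_mono (hq : 0 < q) (hq1 : q < 1) (ha : 0 ≤ a) (ha1 : a < 1) {s t : ℝ}
    (hs : 0 ≤ s) (hst : s ≤ t) : pf a q s ≤ pf a q t := by
  have h1 : q ^ t ≤ q ^ s := Real.rpow_le_rpow_of_exponent_ge hq hq1.le hst
  have h2 : 0 < q ^ t := Real.rpow_pos_of_pos hq t
  have h3 : q ^ s ≤ 1 := Real.rpow_le_one hq.le hq1.le hs
  have h4 : 0 < q ^ s := Real.rpow_pos_of_pos hq s
  have h5 : a * q ^ t ≤ a * q ^ s := mul_le_mul_of_nonneg_left h1 ha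
  have h6 : a * q ^ s ≤ 1 := mul_le_one₀ ha1.le h4.le h3
  exact mul_le_mul (by linarith) (by linarith) (by linarith) (by linarith)

lemma summable_log (hq : 0 < q) (hq1 : q < 1) (ha : 0 ≤ a) (ha1 : a < 1) {t : ℝ} (ht : 0 < t) :
    Summable fun j : ℕ => Real.log (pf a q (t + j)) := by
  rw [← summable_neg_iff]
  have hc : 0 < pf a q t := pf_pos hq hq1 ha ha1 ht
  have hgeo : Summable fun j : ℕ => 2 * q ^ t / pf a q t * q ^ j :=
    (summable_geometric_of_lt_one hq.le hq1).mul_left _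
  refine Summable.of_nonneg_of_le (fun j => ?_) (fun j => ?_) hgeo
  · have htj : 0 < t + (j : ℝ) := add_pos_of_pos_of_nonneg ht (Nat.cast_nonneg j)
    have := Real.log_nonpos (pf_nonneg hq hq1 ha ha1 htj.le) (pf_le_one hq hq1 ha ha1 htj.le)
    linarith
  · have htj : 0 < t + (j : ℝ) := add_pos_of_pos_of_nonneg ht (Nat.cast_nonneg j)
    have hps : 0 < pf a q (t + j) := pf_pos hq hq1 ha ha1 htj
    have hmono : pf a q t ≤ pf a q (t + j) :=
      pf_mono hq hq1 ha ha1 ht.le (le_add_of_nonneg_right (Nat.cast_nonneg j))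
    have hlog : -Real.log (pf a q (t + j)) ≤ (1 - pf a q (t + j)) / pf a q (t + j) := by
      have h2 := Real.log_le_sub_one_of_pos (show 0 < (pf a q (t + j))⁻¹ by positivity)
      rw [Real.log_inv] at h2
      have h3 : (pf a q (t + j))⁻¹ - 1 = (1 - pf a q (t + j)) / pf a q (t + j) := by
        field_simp
      linarith [h3 ▸ h2]
    have hA : 0 < q ^ (t + (j : ℝ)) := Real.rpow_pos_of_pos hq _
    have hnum : 1 - pf a q (t + j) ≤ 2 * q ^ (t + (j : ℝ)) := by
      have hBA : a * q ^ (t + (j : ℝ)) ≤ q ^ (t + (j : ℝ)) := mul_le_of_le_one_left hA.le ha1.le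
      have hAB : 0 ≤ a * q ^ (t + (j : ℝ)) * q ^ (t + (j : ℝ)) := by positivity
      unfold pf
      nlinarith
    have hqs : q ^ (t + (j : ℝ)) = q ^ t * q ^ j := by
      rw [← Real.rpow_natCast q j, ← Real.rpow_add hq]
    calc -Real.log (pf a q (t + j)) ≤ (1 - pf a q (t + j)) / pf a q (t + j) := hlog
      _ ≤ 2 * q ^ (t + (j : ℝ)) / pf a q t := by
          apply div_le_div₀ (by positivity) hnum hc hmono
      _ = 2 * q ^ t / pf a q t * q ^ j := by rw [hqs]; ring

lemma hasProd_pf (hq : 0 < q) (hq1 : q < 1) (ha : 0 ≤ a) (ha1 : a < 1) {t : ℝ} (ht : 0 < t) :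
    HasProd (fun j : ℕ => pf a q (t + j))
      (Real.exp (∑' j : ℕ, Real.log (pf a q (t + j)))) := by
  have h := (summable_log hq hq1 ha ha1 ht).hasSum.rexp
  have he : (Real.exp ∘ fun j : ℕ => Real.log (pf a q (t + j))) = fun j : ℕ => pf a q (t + j) :=
    funext fun j => Real.exp_log
      (pf_pos hq hq1 ha ha1 (add_pos_of_pos_of_nonneg ht (Nat.cast_nonneg j)))
  rwa [he] at h

lemma multipliable_pf (hq : 0 < q) (hq1 : q < 1) (ha : 0 ≤ a) (ha1 : a < 1) {t : ℝ} (ht : 0 < t) :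
    Multipliable fun j : ℕ => pf a q (t + j) :=
  (hasProd_pf hq hq1 ha ha1 ht).multipliable

lemma tprod_pf_pos (hq : 0 < q) (hq1 : q < 1) (ha : 0 ≤ a) (ha1 : a < 1) {t : ℝ} (ht : 0 < t) :
    0 < ∏' j : ℕ, pf a q (t + j) := by
  rw [(hasProd_pf hq hq1 ha ha1 ht).tprod_eq]
  exact Real.exp_pos _

lemma multipliable_pf0 (hq : 0 < q) (hq1 : q < 1) (ha : 0 ≤ a) (ha1 : a < 1) {t : ℝ}
    (ht : 0 ≤ t) : Multipliable fun j : ℕ => pf a q (t + j) := by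
  apply Multipliable.comp_nat_add (k := 1)
  have h := multipliable_pf hq hq1 ha ha1 (t := t + 1) (by linarith)
  have he : (fun n : ℕ => pf a q ((t + 1) + n)) = fun n : ℕ => pf a q (t + ((n + 1 : ℕ) : ℝ)) :=
    funext fun n => by congr 1; push_cast; ring
  rwa [he] at h

lemma tprod_nonneg0 {g : ℕ → ℝ} (hg : ∀ j, 0 ≤ g j) : 0 ≤ ∏' j, g j := by
  by_cases hm : Multipliable g
  · exact ge_of_tendsto' hm.hasProd fun s => Finset.prod_nonneg fun i _ => hg i
  · rw [tprod_eq_one_of_not_multipliable hm]; exact zero_le_one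

lemma tprod_le_tprod_real {f g : ℕ → ℝ} (h0 : ∀ i, 0 ≤ f i) (h : ∀ i, f i ≤ g i)
    (hf : Multipliable f) (hg : Multipliable g) : ∏' i, f i ≤ ∏' i, g i :=
  le_of_tendsto_of_tendsto' hf.hasProd hg.hasProd fun s =>
    Finset.prod_le_prod (fun i _ => h0 i) fun i _ => h i

lemma hasProd_div {u v : ℕ → ℝ} {P Q : ℝ} (hu : HasProd u P) (hv : HasProd v Q) (hQ : Q ≠ 0) :
    HasProd (fun j => u j / v j) (P / Q) := by
  have h : Filter.Tendsto (fun s : Finset ℕ => (∏ b ∈ s, u b) / ∏ b ∈ s, v b)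
      Filter.atTop (nhds (P / Q)) := Filter.Tendsto.div hu hv hQ
  have h2 : (fun s : Finset ℕ => (∏ b ∈ s, u b) / ∏ b ∈ s, v b) =
      fun s : Finset ℕ => ∏ b ∈ s, (u b / v b) :=
    funext fun s => (Finset.prod_div_distrib _ _).symm
  rw [h2] at h
  exact h

lemma rpow_sum (hq : 0 < q) (c : ℕ → ℝ) (n : ℕ) :
    ∏ j ∈ Finset.range n, q ^ c j = q ^ (∑ j ∈ Finset.range n, c j) := by
  induction n with
  | zero => simp
  | succ n ih => rw [Finset.prod_range_succ, Finset.sum_range_succ, ih, ← Real.rpow_add hq]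

lemma key_abs (hq : 0 < q) (hq1 : q < 1) (ha : 0 ≤ a) (ha1 : a < 1) {s : ℝ} (hs : s ≤ 0) :
    |pf a q s| ≤ q ^ (2 * s) * pf a q (-s) := by
  have hP : 0 < q ^ s := Real.rpow_pos_of_pos hq s
  have hP1 : 1 ≤ q ^ s := Real.one_le_rpow_of_pos_of_le_one_of_nonpos hq hq1.le hs
  have hNeg : q ^ (-s) = (q ^ s)⁻¹ := Real.rpow_neg hq.le s
  have h2s : q ^ (2 * s) = q ^ s * q ^ s := by
    rw [← Real.rpow_add hq]; ring_nf
  have habs1 : |1 - q ^ s| = q ^ s - 1 := by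
    rw [abs_sub_comm, abs_of_nonneg (by linarith)]
  have habs2 : |1 - a * q ^ s| ≤ q ^ s - a := by
    rcases le_or_gt (a * q ^ s) 1 with h | h
    · rw [abs_of_nonneg (by linarith)]; nlinarith
    · rw [abs_of_neg (by linarith)]; nlinarith
  have hne : q ^ s ≠ 0 := ne_of_gt hP
  have key : q ^ s * q ^ s * ((1 - (q ^ s)⁻¹) * (1 - a * (q ^ s)⁻¹)) =
      (q ^ s - 1) * (q ^ s - a) := by field_simp; try ring
  unfold pf
  rw [abs_mul, habs1, hNeg, h2s, key]
  exact mul_le_mul_of_nonneg_left habs2 (by linarith)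

lemma pair_mul_le (hq : 0 < q) (hq1 : q < 1) (ha : 0 ≤ a) (ha1 : a < 1) {t1 t2 s1 s2 : ℝ}
    (ht1 : 0 ≤ t1) (hsum : t1 + t2 = s1 + s2) (h11 : t1 ≤ s1) (h12 : t1 ≤ s2)
    (hs1 : 0 ≤ s1) (hs2 : 0 ≤ s2) :
    pf a q t1 * pf a q t2 ≤ pf a q s1 * pf a q s2 := by
  have ht2 : 0 ≤ t2 := by linarith
  have hprod : q ^ t1 * q ^ t2 = q ^ s1 * q ^ s2 := by
    rw [← Real.rpow_add hq, ← Real.rpow_add hq, hsum]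
  have hsum2 : q ^ s1 + q ^ s2 ≤ q ^ t1 + q ^ t2 := by
    have e1 : q ^ s1 = q ^ t1 * q ^ (s1 - t1) := by rw [← Real.rpow_add hq]; ring_nf
    have e2 : q ^ s2 = q ^ t1 * q ^ (s2 - t1) := by rw [← Real.rpow_add hq]; ring_nf
    have e3 : q ^ t2 = q ^ t1 * (q ^ (s1 - t1) * q ^ (s2 - t1)) := by
      rw [← Real.rpow_add hq, ← Real.rpow_add hq]; congr 1; linarith
    have b1 : q ^ (s1 - t1) ≤ 1 := Real.rpow_le_one hq.le hq1.le (by linarith)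
    have b2 : q ^ (s2 - t1) ≤ 1 := Real.rpow_le_one hq.le hq1.le (by linarith)
    have hA : 0 < q ^ t1 := Real.rpow_pos_of_pos hq t1
    nlinarith [mul_nonneg (sub_nonneg.2 b1) (sub_nonneg.2 b2)]
  have hA1 : q ^ t1 ≤ 1 := Real.rpow_le_one hq.le hq1.le ht1
  have hB1 : q ^ t2 ≤ 1 := Real.rpow_le_one hq.le hq1.le ht2
  have hC1 : q ^ s1 ≤ 1 := Real.rpow_le_one hq.le hq1.le hs1
  have hD1 : q ^ s2 ≤ 1 := Real.rpow_le_one hq.le hq1.le hs2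
  have hA0 : 0 < q ^ t1 := Real.rpow_pos_of_pos hq t1
  have hB0 : 0 < q ^ t2 := Real.rpow_pos_of_pos hq t2
  have hC0 : 0 < q ^ s1 := Real.rpow_pos_of_pos hq s1
  have hD0 : 0 < q ^ s2 := Real.rpow_pos_of_pos hq s2
  have B1 : (1 - q ^ t1) * (1 - q ^ t2) ≤ (1 - q ^ s1) * (1 - q ^ s2) := by nlinarith
  have B2 : (1 - a * q ^ t1) * (1 - a * q ^ t2) ≤ (1 - a * q ^ s1) * (1 - a * q ^ s2) := by
    nlinarith [mul_nonneg ha (sub_nonneg.2 hsum2), sq_nonneg a]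
  have n1 : 0 ≤ (1 - q ^ s1) * (1 - q ^ s2) := mul_nonneg (by linarith) (by linarith)
  have n2 : 0 ≤ (1 - a * q ^ t1) * (1 - a * q ^ t2) :=
    mul_nonneg (by nlinarith) (by nlinarith)
  calc pf a q t1 * pf a q t2
      = ((1 - q ^ t1) * (1 - q ^ t2)) * ((1 - a * q ^ t1) * (1 - a * q ^ t2)) := by
        unfold pf; ring
    _ ≤ ((1 - q ^ s1) * (1 - q ^ s2)) * ((1 - a * q ^ s1) * (1 - a * q ^ s2)) :=
        mul_le_mul B1 B2 n2 n1
    _ = pf a q s1 * pf a q s2 := by unfold pf; ring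

lemma term_le (hq : 0 < q) (hq1 : q < 1) (ha : 0 ≤ a) (ha1 : a < 1)
    (x y k l r u nn M : ℝ) (hu : u = 1 + x - k - r)
    (hM : 0 ≤ M) (hkl : l ≤ k) (hlr : r ≤ l) (hr : 0 ≤ r) (hxk : 0 ≤ x - k)
    (hyl : x - k ≤ y - l) (hun0 : 0 ≤ u + nn) (hun2 : u + nn ≤ 1 + y - l) :
    pf a q (1 + k + r + M) * (pf a q (u + nn + M) *
        (pf a q (1 + l - r + M) * pf a q (1 + y - l + r + M)))
      ≤ pf a q (1 + k + M) * (pf a q (1 + x - k + nn + M) *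
        (pf a q (1 + l + M) * pf a q (1 + y - l + M))) := by
  have pairA : pf a q (1 + l - r + M) * pf a q (1 + k + r + M) ≤
      pf a q (1 + l + M) * pf a q (1 + k + M) :=
    pair_mul_le hq hq1 ha ha1 (by linarith) (by ring) (by linarith) (by linarith)
      (by linarith) (by linarith)
  have pairB : pf a q (u + nn + M) * pf a q (1 + y - l + r + M) ≤
      pf a q (1 + x - k + nn + M) * pf a q (1 + y - l + M) :=
    pair_mul_le hq hq1 ha ha1 (by linarith) (by rw [hu]; ring) (by rw [hu]; linarith)
      (by linarith) (by linarith) (by linarith)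
  have hn1 : 0 ≤ pf a q (u + nn + M) * pf a q (1 + y - l + r + M) :=
    mul_nonneg (pf_nonneg hq hq1 ha ha1 (by linarith)) (pf_nonneg hq hq1 ha ha1 (by linarith))
  have hn2 : 0 ≤ pf a q (1 + l + M) * pf a q (1 + k + M) :=
    mul_nonneg (pf_nonneg hq hq1 ha ha1 (by linarith)) (pf_nonneg hq hq1 ha ha1 (by linarith))
  calc pf a q (1 + k + r + M) * (pf a q (u + nn + M) *
        (pf a q (1 + l - r + M) * pf a q (1 + y - l + r + M)))
      = (pf a q (1 + l - r + M) * pf a q (1 + k + r + M)) *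
          (pf a q (u + nn + M) * pf a q (1 + y - l + r + M)) := by ring
    _ ≤ (pf a q (1 + l + M) * pf a q (1 + k + M)) *
          (pf a q (1 + x - k + nn + M) * pf a q (1 + y - l + M)) :=
        mul_le_mul pairA pairB hn1 hn2
    _ = pf a q (1 + k + M) * (pf a q (1 + x - k + nn + M) *
          (pf a q (1 + l + M) * pf a q (1 + y - l + M))) := by ring

lemma aqBinom_eq (hq : 0 < q) (hq1 : q < 1) (ha : 0 ≤ a) (ha1 : a < 1) (x k : ℝ) (hx : 0 ≤ x)
    (h1m : Multipliable fun j : ℕ => pf a q (1 + k + j))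
    (h2m : Multipliable fun j : ℕ => pf a q (1 + x - k + j)) :
    aqBinom a q x k = q ^ (k * (k - x)) *
      (((∏' j : ℕ, pf a q (1 + k + j)) * ∏' j : ℕ, pf a q (1 + x - k + j)) /
        ((∏' j : ℕ, pf a q (1 + j)) * ∏' j : ℕ, pf a q (1 + x + j))) := by
  have hd1 : Multipliable fun j : ℕ => pf a q (1 + j) :=
    multipliable_pf hq hq1 ha ha1 one_pos
  have hd2 : Multipliable fun j : ℕ => pf a q (1 + x + j) :=
    multipliable_pf hq hq1 ha ha1 (by linarith)
  have hDpos : 0 < (∏' j : ℕ, pf a q (1 + j)) * ∏' j : ℕ, pf a q (1 + x + j) :=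
    mul_pos (tprod_pf_pos hq hq1 ha ha1 one_pos) (tprod_pf_pos hq hq1 ha ha1 (by linarith))
  have hdiv : HasProd
      (fun j : ℕ => (pf a q (1 + k + j) * pf a q (1 + x - k + j)) /
        (pf a q (1 + j) * pf a q (1 + x + j)))
      (((∏' j : ℕ, pf a q (1 + k + j)) * ∏' j : ℕ, pf a q (1 + x - k + j)) /
        ((∏' j : ℕ, pf a q (1 + j)) * ∏' j : ℕ, pf a q (1 + x + j))) :=
    hasProd_div (h1m.hasProd.mul h2m.hasProd) (hd1.hasProd.mul hd2.hasProd) hDpos.ne'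
  unfold aqBinom
  congr 1
  rw [← hdiv.tprod_eq]
  exact tprod_congr fun j => by unfold pf; ring

end AqBinomAux

open AqBinomAux Finset

set_option maxHeartbeats 2000000 in
theorem aqBinom_strongly_log_concave
    (a q x y k l r : ℝ) (hq : 0 < q) (hq1 : q < 1) (ha : 0 ≤ a) (ha1 : a < 1)
    (hxy : x ≥ y) (hkl : k ≥ l) (hlr : l ≥ r) (hr : r ≥ 0)
    (h1 : y - l ≥ x - k) (h2 : x - k ≥ 0) :
    aqBinom a q x k * aqBinom a q y l ≥ aqBinom a q x (k + r) * aqBinom a q y (l - r) := by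
  have hl0 : 0 ≤ l := le_trans hr hlr
  have hy0 : 0 ≤ y := by linarith
  have hx0 : 0 ≤ x := by linarith
  set u : ℝ := 1 + x - k - r with hu
  set n : ℕ := ⌈-u⌉₊ with hn
  have hnu : -u ≤ (n : ℝ) := Nat.le_ceil _
  have hun0 : 0 ≤ u + (n : ℝ) := by linarith
  have hnn0 : 0 ≤ (n : ℝ) := Nat.cast_nonneg n
  have hnr : (n : ℝ) ≤ r := by
    rcases Nat.eq_zero_or_pos n with h | h
    · rw [h]; exact_mod_cast hr
    · have h0u : 0 < -u := Nat.ceil_pos.mp (hn ▸ h)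
      have := Nat.ceil_lt_add_one h0u.le
      rw [← hn] at this
      have hu' : -u = r - 1 - (x - k) := by rw [hu]; ring
      linarith
  have hun2 : u + (n : ℝ) ≤ 1 + y - l := by
    rcases Nat.eq_zero_or_pos n with h | h
    · rw [h]; push_cast; rw [hu]; linarith
    · have h0u : 0 < -u := Nat.ceil_pos.mp (hn ▸ h)
      have := Nat.ceil_lt_add_one h0u.le
      rw [← hn] at this
      linarith
  -- multipliability of all chains
  have mA : Multipliable fun j : ℕ => pf a q (1 + k + j) :=
    multipliable_pf hq hq1 ha ha1 (by linarith)
  have mB : Multipliable fun j : ℕ => pf a q (1 + x - k + j) :=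
    multipliable_pf hq hq1 ha ha1 (by linarith)
  have mC : Multipliable fun j : ℕ => pf a q (1 + l + j) :=
    multipliable_pf hq hq1 ha ha1 (by linarith)
  have mD : Multipliable fun j : ℕ => pf a q (1 + y - l + j) :=
    multipliable_pf hq hq1 ha ha1 (by linarith)
  have mA' : Multipliable fun j : ℕ => pf a q (1 + k + r + j) :=
    multipliable_pf hq hq1 ha ha1 (by linarith)
  have mC' : Multipliable fun j : ℕ => pf a q (1 + l - r + j) :=
    multipliable_pf hq hq1 ha ha1 (by linarith)
  have mD' : Multipliable fun j : ℕ => pf a q (1 + y - l + r + j) :=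
    multipliable_pf hq hq1 ha ha1 (by linarith)
  have mUt : Multipliable fun j : ℕ => pf a q (u + (n : ℝ) + j) :=
    multipliable_pf0 hq hq1 ha ha1 hun0
  have mBt : Multipliable fun j : ℕ => pf a q (1 + x - k + (n : ℝ) + j) :=
    multipliable_pf hq hq1 ha ha1 (by linarith)
  -- the full u-chain
  have hUshift_eq : (fun j : ℕ => pf a q (u + (n : ℝ) + j)) =
      fun j : ℕ => pf a q (u + ((j + n : ℕ) : ℝ)) :=
    funext fun j => by congr 1; push_cast; ring
  have mUshift : Multipliable fun j : ℕ => pf a q (u + ((j + n : ℕ) : ℝ)) := by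
    rw [← hUshift_eq]; exact mUt
  have mU : Multipliable fun j : ℕ => pf a q (u + j) :=
    Multipliable.comp_nat_add (k := n) mUshift
  -- head products
  set HR : ℝ := ∏ j ∈ Finset.range n, pf a q (u + j) with hHR
  set HL : ℝ := ∏ j ∈ Finset.range n, pf a q (1 + x - k + j) with hHL
  have hHLpos : 0 < HL :=
    Finset.prod_pos fun j _ => pf_pos hq hq1 ha ha1
      (by have := Nat.cast_nonneg (α := ℝ) j; linarith)
  -- split identities
  have splitU : (∏' j : ℕ, pf a q (u + j)) = HR * ∏' j : ℕ, pf a q (u + (n : ℝ) + j) := by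
    have h := Multipliable.prod_mul_tprod_nat_mul' (f := fun j : ℕ => pf a q (u + j)) (k := n) mUshift
    rw [← h, hHR]
    congr 1
    exact (tprod_congr fun j => congrFun hUshift_eq j).symm
  have hBshift_eq : (fun j : ℕ => pf a q (1 + x - k + (n : ℝ) + j)) =
      fun j : ℕ => pf a q (1 + x - k + ((j + n : ℕ) : ℝ)) :=
    funext fun j => by congr 1; push_cast; ring
  have mBshift : Multipliable fun j : ℕ => pf a q (1 + x - k + ((j + n : ℕ) : ℝ)) := by
    rw [← hBshift_eq]; exact mBt
  have splitX : (∏' j : ℕ, pf a q (1 + x - k + j)) =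
      HL * ∏' j : ℕ, pf a q (1 + x - k + (n : ℝ) + j) := by
    have h := Multipliable.prod_mul_tprod_nat_mul' (f := fun j : ℕ => pf a q (1 + x - k + j)) (k := n) mBshift
    rw [← h, hHL]
    congr 1
    exact (tprod_congr fun j => congrFun hBshift_eq j).symm
  -- tail comparison
  have mRall : Multipliable fun m : ℕ => pf a q (1 + k + r + m) * (pf a q (u + (n : ℝ) + m) *
      (pf a q (1 + l - r + m) * pf a q (1 + y - l + r + m))) :=
    mA'.mul (mUt.mul (mC'.mul mD'))
  have mLall : Multipliable fun m : ℕ => pf a q (1 + k + m) *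
      (pf a q (1 + x - k + (n : ℝ) + m) * (pf a q (1 + l + m) * pf a q (1 + y - l + m))) :=
    mA.mul (mBt.mul (mC.mul mD))
  have hmergeR : (∏' m : ℕ, (pf a q (1 + k + r + m) * (pf a q (u + (n : ℝ) + m) *
      (pf a q (1 + l - r + m) * pf a q (1 + y - l + r + m))))) =
      (∏' j : ℕ, pf a q (1 + k + r + j)) * ((∏' j : ℕ, pf a q (u + (n : ℝ) + j)) *
        ((∏' j : ℕ, pf a q (1 + l - r + j)) * ∏' j : ℕ, pf a q (1 + y - l + r + j))) := by
    rw [Multipliable.tprod_mul mA' (mUt.mul (mC'.mul mD')), Multipliable.tprod_mul mUt (mC'.mul mD'), Multipliable.tprod_mul mC' mD']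
  have hmergeL : (∏' m : ℕ, (pf a q (1 + k + m) * (pf a q (1 + x - k + (n : ℝ) + m) *
      (pf a q (1 + l + m) * pf a q (1 + y - l + m))))) =
      (∏' j : ℕ, pf a q (1 + k + j)) * ((∏' j : ℕ, pf a q (1 + x - k + (n : ℝ) + j)) *
        ((∏' j : ℕ, pf a q (1 + l + j)) * ∏' j : ℕ, pf a q (1 + y - l + j))) := by
    rw [Multipliable.tprod_mul mA (mBt.mul (mC.mul mD)), Multipliable.tprod_mul mBt (mC.mul mD), Multipliable.tprod_mul mC mD]
  have tail_le : (∏' j : ℕ, pf a q (1 + k + r + j)) * ((∏' j : ℕ, pf a q (u + (n : ℝ) + j)) *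
        ((∏' j : ℕ, pf a q (1 + l - r + j)) * ∏' j : ℕ, pf a q (1 + y - l + r + j)))
      ≤ (∏' j : ℕ, pf a q (1 + k + j)) * ((∏' j : ℕ, pf a q (1 + x - k + (n : ℝ) + j)) *
        ((∏' j : ℕ, pf a q (1 + l + j)) * ∏' j : ℕ, pf a q (1 + y - l + j))) := by
    rw [← hmergeR, ← hmergeL]
    refine tprod_le_tprod_real (fun m => ?_) (fun m => ?_) mRall mLall
    · have h1' : 0 ≤ pf a q (1 + k + r + m) :=
        pf_nonneg hq hq1 ha ha1 (by have := Nat.cast_nonneg (α := ℝ) m; linarith)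
      have h2' : 0 ≤ pf a q (u + (n : ℝ) + m) :=
        pf_nonneg hq hq1 ha ha1 (by have := Nat.cast_nonneg (α := ℝ) m; linarith)
      have h3' : 0 ≤ pf a q (1 + l - r + m) :=
        pf_nonneg hq hq1 ha ha1 (by have := Nat.cast_nonneg (α := ℝ) m; linarith)
      have h4' : 0 ≤ pf a q (1 + y - l + r + m) :=
        pf_nonneg hq hq1 ha ha1 (by have := Nat.cast_nonneg (α := ℝ) m; linarith)
      exact mul_nonneg h1' (mul_nonneg h2' (mul_nonneg h3' h4'))
    · exact term_le hq hq1 ha ha1 x y k l r u (n : ℝ) (m : ℝ) hu (Nat.cast_nonneg m)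
        hkl hlr hr h2 h1 hun0 hun2
  have TRnonneg : 0 ≤ (∏' j : ℕ, pf a q (1 + k + r + j)) *
      ((∏' j : ℕ, pf a q (u + (n : ℝ) + j)) *
        ((∏' j : ℕ, pf a q (1 + l - r + j)) * ∏' j : ℕ, pf a q (1 + y - l + r + j))) := by
    have u1 : 0 ≤ ∏' j : ℕ, pf a q (1 + k + r + j) :=
      tprod_nonneg0 fun j => pf_nonneg hq hq1 ha ha1
        (by have := Nat.cast_nonneg (α := ℝ) j; linarith)
    have u2 : 0 ≤ ∏' j : ℕ, pf a q (u + (n : ℝ) + j) :=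
      tprod_nonneg0 fun j => pf_nonneg hq hq1 ha ha1
        (by have := Nat.cast_nonneg (α := ℝ) j; linarith)
    have u3 : 0 ≤ ∏' j : ℕ, pf a q (1 + l - r + j) :=
      tprod_nonneg0 fun j => pf_nonneg hq hq1 ha ha1
        (by have := Nat.cast_nonneg (α := ℝ) j; linarith)
    have u4 : 0 ≤ ∏' j : ℕ, pf a q (1 + y - l + r + j) :=
      tprod_nonneg0 fun j => pf_nonneg hq hq1 ha ha1
        (by have := Nat.cast_nonneg (α := ℝ) j; linarith)
    exact mul_nonneg u1 (mul_nonneg u2 (mul_nonneg u3 u4))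
  -- the head inequality
  set Δ : ℝ := r * (2 * k + 2 * r - x + y - 2 * l) with hΔ
  have harith : 0 ≤ Δ + 2 * (n : ℝ) * u := by
    rcases le_or_gt (-u) 0 with hcase | hcase
    · have hΔ0 : 0 ≤ Δ := by
        rw [hΔ]
        apply mul_nonneg hr
        linarith
      nlinarith
    · have hur1 : -u ≤ r - 1 := by rw [hu]; linarith
      have hkey : (n : ℝ) * (-u) ≤ r * (r - 1) :=
        mul_le_mul hnr hur1 hcase.le (le_trans hnn0 hnr)
      rw [hΔ]
      nlinarith [mul_nonneg hr (sub_nonneg.2 hkl),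
        mul_nonneg hr (show (0:ℝ) ≤ y - l - (x - k) by linarith)]
  have headkey : q ^ Δ * HR ≤ HL := by
    have hqΔ : 0 ≤ q ^ Δ := (Real.rpow_pos_of_pos hq Δ).le
    set S : ℝ := ∑ j ∈ Finset.range n, 2 * (u + (j : ℝ)) with hS
    have hSlb : (n : ℝ) * (2 * u) ≤ S := by
      rw [hS]
      calc (n : ℝ) * (2 * u) = ∑ _j ∈ Finset.range n, 2 * u := by
            rw [Finset.sum_const, Finset.card_range, nsmul_eq_mul]
        _ ≤ ∑ j ∈ Finset.range n, 2 * (u + (j : ℝ)) :=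
            Finset.sum_le_sum fun j _ => by have := Nat.cast_nonneg (α := ℝ) j; linarith
    have hΔS : 0 ≤ Δ + S := by linarith [hSlb]
    have reflect_le : (∏ j ∈ Finset.range n, pf a q (-(u + (j : ℝ)))) ≤
        ∏ j ∈ Finset.range n, pf a q (1 + x - k + j) := by
      rw [← Finset.prod_range_reflect (fun j : ℕ => pf a q (-(u + (j : ℝ)))) n]
      refine Finset.prod_le_prod (fun j hj => ?_) (fun j hj => ?_)
      · have hjn : j < n := Finset.mem_range.mp hj
        have hcast : ((n - 1 - j : ℕ) : ℝ) = (n : ℝ) - 1 - j := by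
          have hnj : n - 1 - j = n - (j + 1) := by omega
          rw [hnj, Nat.cast_sub (by omega)]
          push_cast; ring
        have hn1 : ((n : ℝ) - 1) < -u := by
          have : (n - 1 : ℕ) < n := by omega
          have := Nat.lt_ceil.mp (hn ▸ this)
          have hc : ((n - 1 : ℕ) : ℝ) = (n : ℝ) - 1 := by
            rw [Nat.cast_sub (by omega)]; push_cast; ring
          linarith [hc ▸ this]
        apply pf_nonneg hq hq1 ha ha1
        rw [hcast]
        have hjr : (j : ℝ) ≥ 0 := Nat.cast_nonneg j
        linarith
      · have hjn : j < n := Finset.mem_range.mp hj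
        have hcast : ((n - 1 - j : ℕ) : ℝ) = (n : ℝ) - 1 - j := by
          have hnj : n - 1 - j = n - (j + 1) := by omega
          rw [hnj, Nat.cast_sub (by omega)]
          push_cast; ring
        have hn1 : ((n : ℝ) - 1) < -u := by
          have : (n - 1 : ℕ) < n := by omega
          have := Nat.lt_ceil.mp (hn ▸ this)
          have hc : ((n - 1 : ℕ) : ℝ) = (n : ℝ) - 1 := by
            rw [Nat.cast_sub (by omega)]; push_cast; ring
          linarith [hc ▸ this]
        apply pf_mono hq hq1 ha ha1
        · rw [hcast]
          have hjr : (j : ℝ) ≥ 0 := Nat.cast_nonneg j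
          linarith
        · rw [hcast]
          linarith
    calc q ^ Δ * HR ≤ q ^ Δ * |HR| := mul_le_mul_of_nonneg_left (le_abs_self HR) hqΔ
      _ = q ^ Δ * ∏ j ∈ Finset.range n, |pf a q (u + j)| := by rw [hHR, Finset.abs_prod]
      _ ≤ q ^ Δ * ∏ j ∈ Finset.range n, (q ^ (2 * (u + (j : ℝ))) * pf a q (-(u + (j : ℝ)))) := by
          apply mul_le_mul_of_nonneg_left _ hqΔ
          refine Finset.prod_le_prod (fun j _ => abs_nonneg _) (fun j hj => ?_)
          have hju : (j : ℝ) < -u := Nat.lt_ceil.mp (hn ▸ Finset.mem_range.mp hj)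
          exact key_abs hq hq1 ha ha1 (by linarith)
      _ = q ^ Δ * (q ^ S * ∏ j ∈ Finset.range n, pf a q (-(u + (j : ℝ)))) := by
          rw [Finset.prod_mul_distrib, rpow_sum hq]
      _ = q ^ (Δ + S) * ∏ j ∈ Finset.range n, pf a q (-(u + (j : ℝ))) := by
          rw [Real.rpow_add hq]; ring
      _ ≤ 1 * ∏ j ∈ Finset.range n, pf a q (1 + x - k + j) := by
          apply mul_le_mul (Real.rpow_le_one hq.le hq1.le hΔS) reflect_le
            (Finset.prod_nonneg fun j hj => ?_) zero_le_one
          have hju : (j : ℝ) < -u := Nat.lt_ceil.mp (hn ▸ Finset.mem_range.mp hj)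
          exact pf_nonneg hq hq1 ha ha1 (by linarith)
      _ = HL := by rw [one_mul, hHL]
  -- rewrite the binomials
  have mUfull : Multipliable fun j : ℕ => pf a q (1 + x - (k + r) + j) := by
    have he : (fun j : ℕ => pf a q (1 + x - (k + r) + j)) = fun j : ℕ => pf a q (u + j) :=
      funext fun j => by rw [hu]; congr 1; ring
    rw [he]; exact mU
  have mA'' : Multipliable fun j : ℕ => pf a q (1 + (k + r) + j) := by
    have he : (fun j : ℕ => pf a q (1 + (k + r) + j)) = fun j : ℕ => pf a q (1 + k + r + j) :=
      funext fun j => by congr 1; ring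
    rw [he]; exact mA'
  have mC'' : Multipliable fun j : ℕ => pf a q (1 + (l - r) + j) := by
    have he : (fun j : ℕ => pf a q (1 + (l - r) + j)) = fun j : ℕ => pf a q (1 + l - r + j) :=
      funext fun j => by congr 1; ring
    rw [he]; exact mC'
  have mD'' : Multipliable fun j : ℕ => pf a q (1 + y - (l - r) + j) := by
    have he : (fun j : ℕ => pf a q (1 + y - (l - r) + j)) =
        fun j : ℕ => pf a q (1 + y - l + r + j) :=
      funext fun j => by congr 1; ring
    rw [he]; exact mD'
  rw [ge_iff_le,
    aqBinom_eq hq hq1 ha ha1 x k hx0 mA mB,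
    aqBinom_eq hq hq1 ha ha1 y l hy0 mC mD,
    aqBinom_eq hq hq1 ha ha1 x (k + r) hx0 mA'' mUfull,
    aqBinom_eq hq hq1 ha ha1 y (l - r) hy0 mC'' mD'']
  -- normalize chain bases
  have cA' : (∏' j : ℕ, pf a q (1 + (k + r) + j)) = ∏' j : ℕ, pf a q (1 + k + r + j) :=
    tprod_congr fun j => by congr 1; ring
  have cU : (∏' j : ℕ, pf a q (1 + x - (k + r) + j)) = ∏' j : ℕ, pf a q (u + j) :=
    tprod_congr fun j => by rw [hu]; congr 1; ring
  have cC' : (∏' j : ℕ, pf a q (1 + (l - r) + j)) = ∏' j : ℕ, pf a q (1 + l - r + j) :=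
    tprod_congr fun j => by congr 1; ring
  have cD' : (∏' j : ℕ, pf a q (1 + y - (l - r) + j)) = ∏' j : ℕ, pf a q (1 + y - l + r + j) :=
    tprod_congr fun j => by congr 1; ring
  rw [cA', cU, cC', cD']
  -- abbreviations
  set A : ℝ := ∏' j : ℕ, pf a q (1 + k + j)
  set B : ℝ := ∏' j : ℕ, pf a q (1 + x - k + j)
  set C : ℝ := ∏' j : ℕ, pf a q (1 + l + j)
  set D : ℝ := ∏' j : ℕ, pf a q (1 + y - l + j)
  set A' : ℝ := ∏' j : ℕ, pf a q (1 + k + r + j)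
  set U : ℝ := ∏' j : ℕ, pf a q (u + j)
  set C' : ℝ := ∏' j : ℕ, pf a q (1 + l - r + j)
  set D' : ℝ := ∏' j : ℕ, pf a q (1 + y - l + r + j)
  set Ut : ℝ := ∏' j : ℕ, pf a q (u + (n : ℝ) + j)
  set Bt : ℝ := ∏' j : ℕ, pf a q (1 + x - k + (n : ℝ) + j)
  set D1 : ℝ := ∏' j : ℕ, pf a q (1 + j)
  set DX : ℝ := ∏' j : ℕ, pf a q (1 + x + j)
  set DY : ℝ := ∏' j : ℕ, pf a q (1 + y + j)
  have hD1pos : 0 < D1 := tprod_pf_pos hq hq1 ha ha1 one_pos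
  have hDXpos : 0 < DX := tprod_pf_pos hq hq1 ha ha1 (by linarith)
  have hDYpos : 0 < DY := tprod_pf_pos hq hq1 ha ha1 (by linarith)
  -- key inequality without denominators
  have hpow : q ^ ((k + r) * (k + r - x)) * q ^ ((l - r) * (l - r - y)) =
      q ^ (k * (k - x)) * q ^ (l * (l - y)) * q ^ Δ := by
    rw [← Real.rpow_add hq, ← Real.rpow_add hq, ← Real.rpow_add hq]
    congr 1
    rw [hΔ]; ring
  have hq1pos : 0 < q ^ (k * (k - x)) * q ^ (l * (l - y)) :=
    mul_pos (Real.rpow_pos_of_pos hq _) (Real.rpow_pos_of_pos hq _)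
  have hmid : (q ^ Δ * HR) * (A' * (Ut * (C' * D'))) ≤ HL * (A * (Bt * (C * D))) := by
    calc (q ^ Δ * HR) * (A' * (Ut * (C' * D')))
        ≤ HL * (A' * (Ut * (C' * D'))) := mul_le_mul_of_nonneg_right headkey TRnonneg
      _ ≤ HL * (A * (Bt * (C * D))) := mul_le_mul_of_nonneg_left tail_le hHLpos.le
  have key : q ^ ((k + r) * (k + r - x)) * q ^ ((l - r) * (l - r - y)) * (A' * U * (C' * D')) ≤
      q ^ (k * (k - x)) * q ^ (l * (l - y)) * (A * B * (C * D)) := by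
    rw [hpow, splitU, splitX]
    calc q ^ (k * (k - x)) * q ^ (l * (l - y)) * q ^ Δ *
          (A' * (HR * Ut) * (C' * D'))
        = (q ^ (k * (k - x)) * q ^ (l * (l - y))) *
            ((q ^ Δ * HR) * (A' * (Ut * (C' * D')))) := by ring
      _ ≤ (q ^ (k * (k - x)) * q ^ (l * (l - y))) * (HL * (A * (Bt * (C * D)))) :=
          mul_le_mul_of_nonneg_left hmid hq1pos.le
      _ = q ^ (k * (k - x)) * q ^ (l * (l - y)) * (A * (HL * Bt) * (C * D)) := by ring
  -- final assembly with denominators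
  have e_lhs : q ^ ((k + r) * (k + r - x)) * (A' * U / (D1 * DX)) *
      (q ^ ((l - r) * (l - r - y)) * (C' * D' / (D1 * DY))) =
      (q ^ ((k + r) * (k + r - x)) * q ^ ((l - r) * (l - r - y)) * (A' * U * (C' * D'))) *
        ((D1 * DX) * (D1 * DY))⁻¹ := by ring
  have e_rhs : q ^ (k * (k - x)) * (A * B / (D1 * DX)) *
      (q ^ (l * (l - y)) * (C * D / (D1 * DY))) =
      (q ^ (k * (k - x)) * q ^ (l * (l - y)) * (A * B * (C * D))) *
        ((D1 * DX) * (D1 * DY))⁻¹ := by ring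
  rw [e_lhs, e_rhs]
  apply mul_le_mul_of_nonneg_right key
  exact inv_nonneg.mpr
    (mul_nonneg (mul_nonneg hD1pos.le hDXpos.le) (mul_nonneg hD1pos.le hDYpos.le))
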